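/- Let f be a 1-periodic wall motion that is C¹ on (0,1) with bounded derivative and let g > 0. Define the energy-change (winding) function γ : [0,1) × [0,g) → ℤ by γ(t̃, ṽ) = ⌊(ṽ + 2ḟ(t̃₁))/g⌋ where t̃₁ is the fractional part of t̃ + 2ṽ/g. Then ∫₀^g ∫₀^1 γ(t̃, ṽ) dt̃ dṽ = 0, i.e., the energy change of the limit map F∞ has zero average with respect to μ̃. -/

import Mathlib

open MeasureTheory Filter Set


lemma aux_ne (c : ℝ) : ∀ᵐ x : ℝ, x ≠ c := by
  refine measure_mono_null (fun x hx => ?_) (Real.volume_singleton (a := c))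
  exact not_not.mp hx

lemma aux_II_of_bdd {h : ℝ → ℝ} (hm : Measurable h) {C : ℝ} (hb : ∀ x, |h x| ≤ C)
    (a b : ℝ) : IntervalIntegrable h volume a b := by
  rw [intervalIntegrable_iff]
  exact Measure.integrableOn_of_bounded (by rw [Set.uIoc]; exact measure_Ioc_lt_top.ne)
    hm.aestronglyMeasurable (ae_of_all _ fun x => hb x)

lemma aux_floor_integral {g : ℝ} (hg : 0 < g) (a : ℝ) :
    ∫ v in (0:ℝ)..g, ((⌊(v + a) / g⌋ : ℤ) : ℝ) = a := by
  have h1 : ∀ v : ℝ, ((⌊(v + a)/g⌋:ℤ):ℝ) = (v+a)/g - Int.fract ((v+a)/g) :=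
    fun v => (Int.self_sub_fract _).symm
  have hII1 : IntervalIntegrable (fun v : ℝ => (v+a)/g) volume 0 g :=
    ((continuous_id.add continuous_const).div_const g).intervalIntegrable 0 g
  have hII2 : IntervalIntegrable (fun v : ℝ => Int.fract ((v+a)/g)) volume 0 g := by
    refine aux_II_of_bdd (Measurable.fract (by fun_prop)) (C := 1) (fun x => ?_) 0 g
    rw [abs_of_nonneg (Int.fract_nonneg _)]
    exact (Int.fract_lt_one _).le
  simp only [h1]
  rw [intervalIntegral.integral_sub hII1 hII2]
  have part1 : ∫ v in (0:ℝ)..g, (v+a)/g = g/2 + a := by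
    rw [intervalIntegral.integral_div,
      intervalIntegral.integral_add ((by fun_prop : Continuous fun x:ℝ => x).intervalIntegrable 0 g) (intervalIntegrable_const),
      integral_id, intervalIntegral.integral_const]
    field_simp
    ring
  have part2 : ∫ v in (0:ℝ)..g, Int.fract ((v+a)/g) = g/2 := by
    have hcomp : (fun v : ℝ => Int.fract ((v+a)/g)) = fun v => (fun w => Int.fract (w/g)) (v + a) := rfl
    rw [hcomp, intervalIntegral.integral_comp_add_right (fun w => Int.fract (w/g)) a]
    have hFper : Function.Periodic (fun w : ℝ => Int.fract (w/g)) g := by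
      intro w
      simp [add_div, div_self hg.ne', Int.fract_add_one]
    rw [zero_add, add_comm g a, hFper.intervalIntegral_add_eq a 0, zero_add]
    have hcongr : ∫ w in (0:ℝ)..g, Int.fract (w/g) = ∫ w in (0:ℝ)..g, w/g := by
      refine intervalIntegral.integral_congr_ae ?_
      filter_upwards [aux_ne g] with x hx hmem
      rw [Set.uIoc_of_le hg.le] at hmem
      have hlt : x < g := lt_of_le_of_ne hmem.2 hx
      rw [Int.fract_eq_self.2 ⟨(div_pos hmem.1 hg).le, by rwa [div_lt_one hg]⟩]
    rw [hcongr, intervalIntegral.integral_div, integral_id]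
    field_simp
    ring
  rw [part1, part2]
  ring

/-- The energy-change (winding) function of the limit map:
`γ(t̃, ṽ) = ⌊(ṽ + 2ḟ(t̃₁))/g⌋` where `t̃₁ = frac(t̃ + 2ṽ/g)`. -/
noncomputable def windingNumber (f : ℝ → ℝ) (g : ℝ) (p : ℝ × ℝ) : ℤ :=
  ⌊(p.2 + 2 * deriv f (Int.fract (p.1 + 2 * p.2 / g))) / g⌋

/-- The energy change of the limit map `F∞` has zero average with respect to the
Lebesgue measure `μ̃ = dt̃ dṽ` on the torus:
`∫₀^g ∫₀^1 γ(t̃, ṽ) dt̃ dṽ = 0`. -/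
theorem windingNumber_average_zero (f : ℝ → ℝ) (g : ℝ) (hg : 0 < g)
    (hcont : Continuous f)
    (hper : ∀ t, f (t + 1) = f t)
    (hC1 : ContDiffOn ℝ 1 f (Set.Ioo (0 : ℝ) 1))
    (hbd : ∃ L : ℝ, ∀ t ∈ Set.Ioo (0 : ℝ) 1, |deriv f t| ≤ L) :
    ∫ p in Set.Ico (0 : ℝ) 1 ×ˢ Set.Ico (0 : ℝ) g,
      ((windingNumber f g p : ℤ) : ℝ) ∂volume = 0 := by
  classical
  obtain ⟨L, hL⟩ := hbd
  set L' : ℝ := max L |deriv f 0| with hL'def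
  have hL' : ∀ x : ℝ, 0 ≤ x → x < 1 → |deriv f x| ≤ L' := by
    intro x hx0 hx1
    rcases eq_or_lt_of_le hx0 with h | h
    · rw [← h]; exact le_max_right _ _
    · exact (hL x ⟨h, hx1⟩).trans (le_max_left _ _)
  have hL'0 : 0 ≤ L' := (abs_nonneg _).trans (le_max_right _ _)
  have hd : Measurable (deriv f) := measurable_deriv f
  have hfloorabs : ∀ y : ℝ, |((⌊y⌋:ℤ):ℝ)| ≤ |y| + 1 := by
    intro y
    rw [abs_le]
    constructor
    · nlinarith [Int.sub_one_lt_floor y, Int.floor_le y, neg_abs_le y]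
    · nlinarith [Int.floor_le y, le_abs_self y]
  set M : ℝ := (g + 2 * L') / g + 1 with hM
  have hbound : ∀ v d : ℝ, 0 ≤ v → v < g → |d| ≤ L' →
      |((⌊(v + 2 * d) / g⌋ : ℤ) : ℝ)| ≤ M := by
    intro v d hv0 hvg hdL
    refine (hfloorabs _).trans ?_
    have h1 : |v + 2 * d| ≤ g + 2 * L' := by
      refine (abs_add_le _ _).trans ?_
      rw [abs_of_nonneg hv0, abs_mul, abs_two]
      linarith
    have h2 : |(v + 2 * d) / g| ≤ (g + 2 * L') / g := by
      rw [abs_div, abs_of_pos hg]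
      gcongr
    rw [hM]; linarith
  have hdfract : ∀ x : ℝ, |deriv f (Int.fract x)| ≤ L' :=
    fun x => hL' _ (Int.fract_nonneg x) (Int.fract_lt_one x)
  set μ₁ := volume.restrict (Ico (0:ℝ) 1) with hμ₁
  set μ₂ := volume.restrict (Ico (0:ℝ) g) with hμ₂
  set γ : ℝ × ℝ → ℝ :=
    fun p => ((⌊(p.2 + 2 * deriv f (Int.fract (p.1 + 2 * p.2 / g))) / g⌋ : ℤ) : ℝ) with hγ
  set G : ℝ × ℝ → ℝ := fun p => ((⌊(p.2 + 2 * deriv f p.1) / g⌋ : ℤ) : ℝ) with hG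
  have hmγ : Measurable γ := by
    refine measurable_from_top.comp (Int.measurable_floor.comp (Measurable.div_const ?_ g))
    exact measurable_snd.add
      (((hd.comp (Measurable.fract (by fun_prop))).const_mul 2))
  have hmG : Measurable G := by
    refine measurable_from_top.comp (Int.measurable_floor.comp (Measurable.div_const ?_ g))
    exact measurable_snd.add ((hd.comp measurable_fst).const_mul 2)
  have hprodset : MeasurableSet (Ico (0:ℝ) 1 ×ˢ Ico (0:ℝ) g) :=
    measurableSet_Ico.prod measurableSet_Ico
  have key : ∀ h : ℝ × ℝ → ℝ, Measurable h →
      (∀ p : ℝ × ℝ, p.1 ∈ Ico (0:ℝ) 1 → p.2 ∈ Ico (0:ℝ) g → |h p| ≤ M) →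
      Integrable h (μ₁.prod μ₂) := by
    intro h hm hb
    rw [hμ₁, hμ₂, Measure.prod_restrict, ← Measure.volume_eq_prod]
    refine Measure.integrableOn_of_bounded (M := M) ?_ hm.aestronglyMeasurable ?_
    · rw [Measure.volume_eq_prod, Measure.prod_prod]
      exact (ENNReal.mul_lt_top measure_Ico_lt_top measure_Ico_lt_top).ne
    · filter_upwards [ae_restrict_mem hprodset] with p hp
      rw [Real.norm_eq_abs]
      exact hb p hp.1 hp.2
  have hIγ : Integrable γ (μ₁.prod μ₂) := by
    refine key γ hmγ fun p hp1 hp2 => ?_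
    exact hbound p.2 _ hp2.1 hp2.2 (hdfract _)
  have hIG : Integrable G (μ₁.prod μ₂) := by
    refine key G hmG fun p hp1 hp2 => ?_
    exact hbound p.2 _ hp2.1 hp2.2 (hL' _ hp1.1 hp1.2)
  -- inner translation step
  have step2 : ∀ v : ℝ, (∫ t, γ (t, v) ∂μ₁) = ∫ s, G (s, v) ∂μ₁ := by
    intro v
    set Hv : ℝ → ℝ := fun t => ((⌊(v + 2 * deriv f (Int.fract t)) / g⌋ : ℤ) : ℝ) with hHv
    have hHper : Function.Periodic Hv 1 := fun t => by simp [hHv, Int.fract_add_one]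
    have hHm : Measurable Hv := by
      refine measurable_from_top.comp (Int.measurable_floor.comp (Measurable.div_const ?_ g))
      exact measurable_const.add ((hd.comp (Measurable.fract measurable_id)).const_mul 2)
    have hHb : ∀ t, |Hv t| ≤ (|v| + 2 * L') / g + 1 := by
      intro t
      refine (hfloorabs _).trans ?_
      have h1 : |v + 2 * deriv f (Int.fract t)| ≤ |v| + 2 * L' := by
        refine (abs_add_le _ _).trans ?_
        rw [abs_mul, abs_two]
        have := hdfract t
        linarith
      have h2 : |(v + 2 * deriv f (Int.fract t)) / g| ≤ (|v| + 2 * L') / g := by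
        rw [abs_div, abs_of_pos hg]; gcongr
      linarith
    have hHI : ∀ a b : ℝ, IntervalIntegrable Hv volume a b :=
      aux_II_of_bdd hHm hHb
    have hcomp : (fun t => γ (t, v)) = fun t => Hv (t + 2 * v / g) := rfl
    rw [hμ₁]
    show ∫ t in Ico (0:ℝ) 1, γ (t, v) = ∫ s in Ico (0:ℝ) 1, G (s, v)
    rw [hcomp]
    rw [integral_Ico_eq_integral_Ioo, ← integral_Ioc_eq_integral_Ioo,
      ← intervalIntegral.integral_of_le zero_le_one,
      intervalIntegral.integral_comp_add_right Hv (2 * v / g),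
      zero_add, add_comm (1:ℝ) (2 * v / g),
      hHper.intervalIntegral_add_eq (2 * v / g) 0, zero_add,
      intervalIntegral.integral_of_le zero_le_one,
      integral_Ioc_eq_integral_Ioo]
    rw [show (∫ s in Ico (0:ℝ) 1, G (s, v)) = ∫ s in Ioo (0:ℝ) 1, G (s, v) from
      integral_Ico_eq_integral_Ioo]
    refine setIntegral_congr_fun measurableSet_Ioo fun t ht => ?_
    simp only [hHv, hG, Int.fract_eq_self.2 ⟨ht.1.le, ht.2⟩]
  have step4 : ∀ s : ℝ, (∫ v, G (s, v) ∂μ₂) = 2 * deriv f s := by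
    intro s
    rw [hμ₂]
    show ∫ v in Ico (0:ℝ) g, G (s, v) = 2 * deriv f s
    rw [integral_Ico_eq_integral_Ioo, ← integral_Ioc_eq_integral_Ioo,
      ← intervalIntegral.integral_of_le hg.le]
    exact aux_floor_integral hg (2 * deriv f s)
  have step5 : (∫ s, 2 * deriv f s ∂μ₁) = 0 := by
    have hderiv : ∀ x ∈ Ioo (0:ℝ) 1, HasDerivWithinAt f (deriv f x) (Ioi x) x := by
      intro x hx
      exact (((hC1.differentiableOn one_ne_zero) x hx).differentiableAt
        (isOpen_Ioo.mem_nhds hx)).hasDerivAt.hasDerivWithinAt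
    have hint : IntervalIntegrable (deriv f) volume 0 1 := by
      rw [intervalIntegrable_iff_integrableOn_Ioo_of_le zero_le_one]
      refine Measure.integrableOn_of_bounded (M := L) measure_Ioo_lt_top.ne
        hd.aestronglyMeasurable ?_
      filter_upwards [ae_restrict_mem measurableSet_Ioo] with x hx
      rw [Real.norm_eq_abs]
      exact hL x hx
    have hftc : ∫ x in (0:ℝ)..1, deriv f x = f 1 - f 0 :=
      intervalIntegral.integral_eq_sub_of_hasDeriv_right_of_le zero_le_one
        (hcont.continuousOn) hderiv hint
    have hf1 : f 1 = f 0 := by have := hper 0; rwa [zero_add] at this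
    rw [hμ₁]
    show ∫ s in Ico (0:ℝ) 1, 2 * deriv f s = 0
    rw [integral_Ico_eq_integral_Ioo, ← integral_Ioc_eq_integral_Ioo,
      ← intervalIntegral.integral_of_le zero_le_one,
      intervalIntegral.integral_const_mul, hftc, hf1]
    ring
  have hγeq : (fun p : ℝ × ℝ => ((windingNumber f g p : ℤ) : ℝ)) = γ := rfl
  calc ∫ p in Set.Ico (0:ℝ) 1 ×ˢ Set.Ico (0:ℝ) g, ((windingNumber f g p : ℤ) : ℝ) ∂volume
      = ∫ p, γ p ∂(μ₁.prod μ₂) := by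
        rw [hγeq, hμ₁, hμ₂, Measure.prod_restrict, ← Measure.volume_eq_prod]
    _ = ∫ v, (∫ t, γ (t, v) ∂μ₁) ∂μ₂ := integral_prod_symm γ hIγ
    _ = ∫ v, (∫ s, G (s, v) ∂μ₁) ∂μ₂ :=
        integral_congr_ae (Eventually.of_forall fun v => step2 v)
    _ = ∫ z, G z ∂(μ₁.prod μ₂) := (integral_prod_symm G hIG).symm
    _ = ∫ s, (∫ v, G (s, v) ∂μ₂) ∂μ₁ := integral_prod G hIG
    _ = ∫ s, 2 * deriv f s ∂μ₁ :=
        integral_congr_ae (Eventually.of_forall fun s => step4 s)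
    _ = 0 := step5
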